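/- If Θ is dense in [0,1], then any two probability measures μ, μ' on X × T satisfying the constraint 'μ([φ]) ≥ θ iff B_i^θ φ ∈ t_i for all θ ∈ Θ' agree on every set [φ], with common value sup{θ ∈ Θ : B_i^θ φ ∈ t_i}; hence they agree on the σ-algebra generated by {[φ]} and P_{t_i} is a singleton. -/

import Mathlib

open MeasureTheory ENNReal

/-- The language `L_B^Θ`: primitive propositions, negation, conjunction, and belief
operators `B_i^θ` for `θ ∈ Θ`. -/
inductive Formula (Φ I : Type*) (Θ : Set ℝ≥0∞) : Type _ where
  | prim : Φ → Formula Φ I Θ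
  | neg : Formula Φ I Θ → Formula Φ I Θ
  | conj : Formula Φ I Θ → Formula Φ I Θ → Formula Φ I Θ
  | bel : I → Θ → Formula Φ I Θ → Formula Φ I Θ

/-- Truth sets of formulas in a probability model `(Ω, (Pr_i), π)`. -/
def sem {Ω Φ I : Type*} {Θ : Set ℝ≥0∞} [MeasurableSpace Ω]
    (Pr : I → Ω → Measure Ω) (π : Φ → Set Ω) : Formula Φ I Θ → Set Ω
  | .prim p => π p
  | .neg φ => (sem Pr π φ)ᶜ
  | .conj φ ψ => sem Pr π φ ∩ sem Pr π ψ
  | .bel i θ φ => {ω | (θ : ℝ≥0∞) ≤ Pr i ω (sem Pr π φ)}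

/-- A probability model: a measurable space of worlds, measurable introspective belief
functions `Pr_i : Ω → Δ(Ω)`, and an interpretation `π` of primitive propositions. -/
structure ProbModel (Φ : Type) (n : ℕ) (Θ : Set ℝ≥0∞) where
  Ω : Type
  ms : MeasurableSpace Ω
  Pr : Fin n → Ω → @Measure Ω ms
  prob : ∀ i ω, IsProbabilityMeasure (Pr i ω)
  measPr : ∀ i (E : Set Ω) (θ : ℝ≥0∞), MeasurableSet[ms] E →
    MeasurableSet[ms] {ω | θ ≤ Pr i ω E}
  π : Φ → Set Ω
  measπ : ∀ p, MeasurableSet[ms] (π p)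
  introspect : ∀ i ω,
    (⨅ (E : Set Ω) (_ : {ω' | Pr i ω' = Pr i ω} ⊆ E) (_ : MeasurableSet[ms] E), Pr i ω E) = 1

/-- Truth sets in a (bundled) probability model. -/
def ProbModel.sem {Φ : Type} {n : ℕ} {Θ : Set ℝ≥0∞} (M : ProbModel Φ n Θ) :
    Formula Φ (Fin n) Θ → Set M.Ω :=
  @_root_.sem M.Ω Φ (Fin n) Θ M.ms M.Pr M.π

/-- Purely propositional formulas: Boolean combinations of primitive propositions. -/
inductive IsProp {Φ I : Type*} {Θ : Set ℝ≥0∞} : Formula Φ I Θ → Prop where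
  | prim (p : Φ) : IsProp (.prim p)
  | neg {φ} : IsProp φ → IsProp (.neg φ)
  | conj {φ ψ} : IsProp φ → IsProp ψ → IsProp (.conj φ ψ)

/-- `i`-formulas: Boolean combinations of formulas of the form `B_i^θ ψ`. -/
inductive IsIFormula {Φ I : Type*} {Θ : Set ℝ≥0∞} (i : I) : Formula Φ I Θ → Prop where
  | bel (θ : Θ) (φ : Formula Φ I Θ) : IsIFormula i (.bel i θ φ)
  | neg {φ} : IsIFormula i φ → IsIFormula i (.neg φ)
  | conj {φ ψ} : IsIFormula i φ → IsIFormula i ψ → IsIFormula i (.conj φ ψ)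

/-- The `0`-description of a world: all purely propositional formulas true at it. -/
def d0 {Φ : Type} {n : ℕ} {Θ : Set ℝ≥0∞} (M : ProbModel Φ n Θ) (ω : M.Ω) :
    Set (Formula Φ (Fin n) Θ) :=
  {φ | IsProp φ ∧ ω ∈ M.sem φ}

/-- The `i`-description of a world: all `i`-formulas true at it. -/
def di {Φ : Type} {n : ℕ} {Θ : Set ℝ≥0∞} (M : ProbModel Φ n Θ) (i : Fin n) (ω : M.Ω) :
    Set (Formula Φ (Fin n) Θ) :=
  {φ | IsIFormula i φ ∧ ω ∈ M.sem φ}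

/-- `ω` satisfies every formula in `S`. -/
def SatAll {Φ : Type} {n : ℕ} {Θ : Set ℝ≥0∞} (M : ProbModel Φ n Θ) (ω : M.Ω)
    (S : Set (Formula Φ (Fin n) Θ)) : Prop :=
  ∀ φ ∈ S, ω ∈ M.sem φ

/-- Semantic entailment: every world of every probability model satisfying all of `S`
satisfies `φ`. -/
def Entails {Φ : Type} {n : ℕ} {Θ : Set ℝ≥0∞} (S : Set (Formula Φ (Fin n) Θ))
    (φ : Formula Φ (Fin n) Θ) : Prop :=
  ∀ (M : ProbModel Φ n Θ) (ω : M.Ω), SatAll M ω S → ω ∈ M.sem φ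

/-- A description: a satisfiable and maximal set of formulas. -/
def IsDescription {Φ : Type} {n : ℕ} {Θ : Set ℝ≥0∞} (D : Set (Formula Φ (Fin n) Θ)) : Prop :=
  (∃ (M : ProbModel Φ n Θ) (ω : M.Ω), SatAll M ω D) ∧
    ∀ φ : Formula Φ (Fin n) Θ, φ ∈ D ∨ Formula.neg φ ∈ D

variable {Φ : Type} {n : ℕ} {Θ : Set ℝ≥0∞}

/-- The space `X` of 0-descriptions arising from worlds of `M`. -/
def Desc0 (M : ProbModel Φ n Θ) : Type :=
  {x : Set (Formula Φ (Fin n) Θ) // ∃ ω : M.Ω, x = d0 M ω}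

/-- The space `T_i` of `i`-descriptions arising from worlds of `M`. -/
def DescI (M : ProbModel Φ n Θ) (i : Fin n) : Type :=
  {t : Set (Formula Φ (Fin n) Θ) // ∃ ω : M.Ω, t = di M i ω}

/-- `E_0(φ) = {x : φ ∈ x}`. -/
def E0 (M : ProbModel Φ n Θ) (φ : Formula Φ (Fin n) Θ) : Set (Desc0 M) :=
  {x | φ ∈ x.1}

/-- `E_i(φ) = {t_i : φ ∈ t_i}`. -/
def Ei (M : ProbModel Φ n Θ) (i : Fin n) (φ : Formula Φ (Fin n) Θ) : Set (DescI M i) :=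
  {t | φ ∈ t.1}

instance (M : ProbModel Φ n Θ) : MeasurableSpace (Desc0 M) :=
  MeasurableSpace.generateFrom {s | ∃ φ, s = E0 M φ}

instance (M : ProbModel Φ n Θ) (i : Fin n) : MeasurableSpace (DescI M i) :=
  MeasurableSpace.generateFrom {s | ∃ φ, s = Ei M i φ}

/-- `[φ] = {(x,t) : φ ∈ D(x,t)}`, where `D(x,t)` is the unique description extending
`x ∪ ⋃_i t_i`; membership in `D(x,t)` is equivalently expressed by entailment. -/
def brack (M : ProbModel Φ n Θ) (φ : Formula Φ (Fin n) Θ) :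
    Set (Desc0 M × ∀ i, DescI M i) :=
  {q | Entails (q.1.1 ∪ ⋃ i : Fin n, (q.2 i).1) φ}

/-! ### Auxiliary lemmas -/

lemma sem_conj' (M : ProbModel Φ n Θ) (φ ψ : Formula Φ (Fin n) Θ) :
    M.sem (.conj φ ψ) = M.sem φ ∩ M.sem ψ := rfl

lemma sem_neg' (M : ProbModel Φ n Θ) (φ : Formula Φ (Fin n) Θ) :
    M.sem (.neg φ) = (M.sem φ)ᶜ := rfl

lemma brack_inter (M : ProbModel Φ n Θ) (φ ψ : Formula Φ (Fin n) Θ) :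
    brack M φ ∩ brack M ψ = brack M (.conj φ ψ) := by
  ext q
  constructor
  · rintro ⟨h1, h2⟩ M' ω' hS
    exact ⟨h1 M' ω' hS, h2 M' ω' hS⟩
  · intro hq
    exact ⟨fun M' ω' hS => (hq M' ω' hS).1, fun M' ω' hS => (hq M' ω' hS).2⟩

/-- The set of satisfiable pairs `(x, t)`. -/
def SatQ (M : ProbModel Φ n Θ) : Set (Desc0 M × ∀ j, DescI M j) :=
  {q | ∃ (M' : ProbModel Φ n Θ) (ω' : M'.Ω), SatAll M' ω' (q.1.1 ∪ ⋃ j : Fin n, (q.2 j).1)}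

lemma compl_SatQ_subset_brack (M : ProbModel Φ n Θ) (ψ : Formula Φ (Fin n) Θ) :
    (SatQ M)ᶜ ⊆ brack M ψ := fun _ hq M' ω' hS => absurd ⟨M', ω', hS⟩ hq

lemma brack_contra_inter_SatQ (M : ProbModel Φ n Θ) (ψ : Formula Φ (Fin n) Θ) :
    brack M (.conj ψ (.neg ψ)) ∩ SatQ M = ∅ := by
  ext q
  simp only [Set.mem_inter_iff, Set.mem_empty_iff_false, iff_false, not_and]
  rintro hb ⟨M', ω', hS⟩
  have := hb M' ω' hS
  exact this.2 this.1

lemma brack_val {M : ProbModel Φ n Θ} (hdense : Set.Icc (0 : ℝ≥0∞) 1 ⊆ closure Θ)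
    {i : Fin n} {ω : M.Ω} {μ : Measure (Desc0 M × ∀ j, DescI M j)}
    (hμ : IsProbabilityMeasure μ)
    (h : ∀ (φ : Formula Φ (Fin n) Θ) (θ : Θ),
      ((θ : ℝ≥0∞) ≤ μ (brack M φ) ↔ Formula.bel i θ φ ∈ di M i ω))
    (φ : Formula Φ (Fin n) Θ) :
    μ (brack M φ) = sSup {r : ℝ≥0∞ | ∃ θ : Θ, r = (θ : ℝ≥0∞) ∧
      Formula.bel i θ φ ∈ di M i ω} := by
  haveI := hμ
  set S : Set ℝ≥0∞ := {r : ℝ≥0∞ | ∃ θ : Θ, r = (θ : ℝ≥0∞) ∧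
    Formula.bel i θ φ ∈ di M i ω} with hS
  refine le_antisymm ?_ (sSup_le ?_)
  · by_contra hlt
    push_neg at hlt
    obtain ⟨c, hc1, hc2⟩ := exists_between hlt
    have hc01 : c ∈ Set.Icc (0 : ℝ≥0∞) 1 := ⟨zero_le, hc2.le.trans prob_le_one⟩
    have hcl := hdense hc01
    rw [mem_closure_iff] at hcl
    obtain ⟨θ, hθO, hθΘ⟩ := hcl (Set.Ioo (sSup S) (μ (brack M φ))) isOpen_Ioo ⟨hc1, hc2⟩
    have hmem : Formula.bel i ⟨θ, hθΘ⟩ φ ∈ di M i ω := (h φ ⟨θ, hθΘ⟩).1 hθO.2.le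
    have hle : θ ≤ sSup S := le_sSup ⟨⟨θ, hθΘ⟩, rfl, hmem⟩
    exact absurd hθO.1 (LE.le.not_gt hle)
  · rintro r ⟨θ, rfl, hmem⟩
    exact (h φ θ).2 hmem

lemma brack_contra_zero {M : ProbModel Φ n Θ} (hdense : Set.Icc (0 : ℝ≥0∞) 1 ⊆ closure Θ)
    {i : Fin n} {ω : M.Ω} {μ : Measure (Desc0 M × ∀ j, DescI M j)}
    (hμ : IsProbabilityMeasure μ)
    (h : ∀ (φ : Formula Φ (Fin n) Θ) (θ : Θ),
      ((θ : ℝ≥0∞) ≤ μ (brack M φ) ↔ Formula.bel i θ φ ∈ di M i ω))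
    (ψ : Formula Φ (Fin n) Θ) :
    μ (brack M (.conj ψ (.neg ψ))) = 0 := by
  rw [brack_val hdense hμ h]
  refine le_antisymm (sSup_le ?_) zero_le
  rintro r ⟨θ, rfl, hmem⟩
  have h2 : ω ∈ M.sem (Formula.bel i θ (.conj ψ (.neg ψ))) := hmem.2
  have h3 : (θ : ℝ≥0∞) ≤ M.Pr i ω (M.sem (.conj ψ (.neg ψ))) := h2
  rw [show M.sem (Formula.conj ψ (.neg ψ)) = ∅ by
    rw [sem_conj', sem_neg', Set.inter_compl_self]] at h3
  rwa [measure_empty] at h3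

lemma mu_eq_of_inter_SatQ {M : ProbModel Φ n Θ} (hdense : Set.Icc (0 : ℝ≥0∞) 1 ⊆ closure Θ)
    {i : Fin n} {ω : M.Ω} {μ : Measure (Desc0 M × ∀ j, DescI M j)}
    (hμ : IsProbabilityMeasure μ)
    (h : ∀ (φ : Formula Φ (Fin n) Θ) (θ : Θ),
      ((θ : ℝ≥0∞) ≤ μ (brack M φ) ↔ Formula.bel i θ φ ∈ di M i ω))
    {A : Set (Desc0 M × ∀ j, DescI M j)} {ψ : Formula Φ (Fin n) Θ}
    (hA : A ∩ SatQ M = brack M ψ ∩ SatQ M) :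
    μ A = μ (brack M ψ) := by
  have h0 : μ ((SatQ M)ᶜ) = 0 :=
    le_antisymm ((measure_mono (compl_SatQ_subset_brack M (.conj ψ (.neg ψ)))).trans
      (brack_contra_zero hdense hμ h ψ).le) zero_le
  have key : ∀ B : Set (Desc0 M × ∀ j, DescI M j), μ B = μ (B ∩ SatQ M) := by
    intro B
    refine le_antisymm ?_ (measure_mono Set.inter_subset_left)
    calc μ B = μ ((B ∩ SatQ M) ∪ (B ∩ (SatQ M)ᶜ)) := by rw [Set.inter_union_compl]
      _ ≤ μ (B ∩ SatQ M) + μ (B ∩ (SatQ M)ᶜ) := measure_union_le _ _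
      _ ≤ μ (B ∩ SatQ M) + 0 := by
          gcongr
          exact (measure_mono Set.inter_subset_right).trans h0.le
      _ = μ (B ∩ SatQ M) := add_zero _
  rw [key A, hA, ← key]

/-- The generating family for the product σ-algebra. -/
def GenB (M : ProbModel Φ n Θ) : Set (Set (Desc0 M × ∀ j, DescI M j)) :=
  {s | ∃ φ, s = Prod.fst ⁻¹' (E0 M φ)} ∪
    ⋃ j : Fin n, {s | ∃ φ, s = (fun q : Desc0 M × ∀ j, DescI M j => q.2 j) ⁻¹' (Ei M j φ)}

lemma mspace_eq (M : ProbModel Φ n Θ) :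
    (inferInstance : MeasurableSpace (Desc0 M × ∀ j, DescI M j)) =
      MeasurableSpace.generateFrom (GenB M) := by
  refine le_antisymm ?_ (MeasurableSpace.generateFrom_le ?_)
  · show (MeasurableSpace.comap Prod.fst inferInstance ⊔
      MeasurableSpace.comap Prod.snd MeasurableSpace.pi) ≤ _
    refine sup_le ?_ ?_
    · rw [show (inferInstance : MeasurableSpace (Desc0 M)) =
        MeasurableSpace.generateFrom {s | ∃ φ, s = E0 M φ} from rfl,
        MeasurableSpace.comap_generateFrom]
      refine MeasurableSpace.generateFrom_le ?_
      rintro _ ⟨_, ⟨φ, rfl⟩, rfl⟩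
      exact MeasurableSpace.measurableSet_generateFrom (Or.inl ⟨φ, rfl⟩)
    · rw [MeasurableSpace.pi, MeasurableSpace.comap_iSup]
      refine iSup_le fun j => ?_
      rw [MeasurableSpace.comap_comp,
        show instMeasurableSpaceDescI M j =
          MeasurableSpace.generateFrom {s | ∃ φ, s = Ei M j φ} from rfl,
        MeasurableSpace.comap_generateFrom]
      refine MeasurableSpace.generateFrom_le ?_
      rintro _ ⟨_, ⟨φ, rfl⟩, rfl⟩
      exact MeasurableSpace.measurableSet_generateFrom
        (Or.inr (Set.mem_iUnion.2 ⟨j, ⟨φ, rfl⟩⟩))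
  · rintro s (⟨φ, rfl⟩ | hs)
    · exact (MeasurableSpace.measurableSet_generateFrom ⟨φ, rfl⟩ :
        MeasurableSet (E0 M φ)).preimage measurable_fst
    · obtain ⟨_, ⟨j, rfl⟩, ⟨φ, rfl⟩⟩ := hs
      exact (MeasurableSpace.measurableSet_generateFrom ⟨φ, rfl⟩ :
        MeasurableSet (Ei M j φ)).preimage ((measurable_pi_apply j).comp measurable_snd)

lemma good_of_mem_GenB (M : ProbModel Φ n Θ) {s : Set (Desc0 M × ∀ j, DescI M j)}
    (hs : s ∈ GenB M) : ∃ ψ, s ∩ SatQ M = brack M ψ ∩ SatQ M := by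
  rcases hs with ⟨φ, rfl⟩ | hs
  · by_cases hp : IsProp φ
    · refine ⟨φ, ?_⟩
      ext q
      simp only [Set.mem_inter_iff, Set.mem_preimage]
      constructor
      · rintro ⟨hφx, hsat⟩
        exact ⟨fun M' ω' hS => hS φ (Set.mem_union_left _ hφx), hsat⟩
      · rintro ⟨hbr, hsat⟩
        refine ⟨?_, hsat⟩
        obtain ⟨ω₁, hx⟩ := q.1.2
        obtain ⟨M', ω', hS⟩ := hsat
        show φ ∈ q.1.1
        rw [hx]
        refine ⟨hp, ?_⟩
        by_contra hω
        have hneg : Formula.neg φ ∈ q.1.1 := by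
          rw [hx]; exact ⟨IsProp.neg hp, hω⟩
        exact hS (Formula.neg φ) (Set.mem_union_left _ hneg) (hbr M' ω' hS)
    · refine ⟨.conj φ (.neg φ), ?_⟩
      rw [brack_contra_inter_SatQ]
      ext q
      simp only [Set.mem_inter_iff, Set.mem_preimage, Set.mem_empty_iff_false, iff_false,
        not_and]
      intro hφx _
      obtain ⟨ω₁, hx⟩ := q.1.2
      have hφx2 : φ ∈ d0 M ω₁ := by rw [← hx]; exact hφx
      exact hp hφx2.1
  · obtain ⟨_, ⟨j, rfl⟩, ⟨φ, rfl⟩⟩ := hs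
    by_cases hp : IsIFormula j φ
    · refine ⟨φ, ?_⟩
      ext q
      simp only [Set.mem_inter_iff, Set.mem_preimage]
      constructor
      · rintro ⟨hφt, hsat⟩
        exact ⟨fun M' ω' hS => hS φ (Set.mem_union_right _
          (Set.mem_iUnion.2 ⟨j, hφt⟩)), hsat⟩
      · rintro ⟨hbr, hsat⟩
        refine ⟨?_, hsat⟩
        obtain ⟨ω₁, ht⟩ := (q.2 j).2
        obtain ⟨M', ω', hS⟩ := hsat
        show φ ∈ (q.2 j).1
        rw [ht]
        refine ⟨hp, ?_⟩
        by_contra hω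
        have hneg : Formula.neg φ ∈ (q.2 j).1 := by
          rw [ht]; exact ⟨IsIFormula.neg hp, hω⟩
        exact hS (Formula.neg φ)
          (Set.mem_union_right _ (Set.mem_iUnion.2 ⟨j, hneg⟩)) (hbr M' ω' hS)
    · refine ⟨.conj φ (.neg φ), ?_⟩
      rw [brack_contra_inter_SatQ]
      ext q
      simp only [Set.mem_inter_iff, Set.mem_preimage, Set.mem_empty_iff_false, iff_false,
        not_and]
      intro hφt _
      obtain ⟨ω₁, ht⟩ := (q.2 j).2
      have hφt2 : φ ∈ di M j ω₁ := by rw [← ht]; exact hφt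
      exact hp hφt2.1

lemma good_of_mem_piSystem (M : ProbModel Φ n Θ) {s : Set (Desc0 M × ∀ j, DescI M j)}
    (hs : s ∈ generatePiSystem (GenB M)) :
    ∃ ψ, s ∩ SatQ M = brack M ψ ∩ SatQ M := by
  induction hs with
  | base hb => exact good_of_mem_GenB M hb
  | inter hs ht hne ihs iht =>
    obtain ⟨ψ1, e1⟩ := ihs
    obtain ⟨ψ2, e2⟩ := iht
    exact ⟨.conj ψ1 ψ2, by
      rw [Set.inter_inter_distrib_right, e1, e2, ← Set.inter_inter_distrib_right,
        brack_inter]⟩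

/-- If `Θ` is dense in `[0,1]`, then any two probability measures on `X × T` satisfying
the constraints determined by an `i`-description `t_i` agree on every `[φ]`, with common
value `sup {θ ∈ Θ : B_i^θ φ ∈ t_i}`; hence they are equal and `P_{t_i}` is a singleton. -/
theorem stmt17 (M : ProbModel Φ n Θ)
    (hdense : Set.Icc (0 : ℝ≥0∞) 1 ⊆ closure Θ)
    (i : Fin n) (ω : M.Ω)
    (μ μ' : Measure (Desc0 M × ∀ j, DescI M j))
    (hμ : IsProbabilityMeasure μ) (hμ' : IsProbabilityMeasure μ')
    (h : ∀ (φ : Formula Φ (Fin n) Θ) (θ : Θ),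
      ((θ : ℝ≥0∞) ≤ μ (brack M φ) ↔ Formula.bel i θ φ ∈ di M i ω))
    (h' : ∀ (φ : Formula Φ (Fin n) Θ) (θ : Θ),
      ((θ : ℝ≥0∞) ≤ μ' (brack M φ) ↔ Formula.bel i θ φ ∈ di M i ω)) :
    (∀ φ : Formula Φ (Fin n) Θ,
      μ (brack M φ) = sSup {r : ℝ≥0∞ | ∃ θ : Θ, r = (θ : ℝ≥0∞) ∧
        Formula.bel i θ φ ∈ di M i ω} ∧
      μ (brack M φ) = μ' (brack M φ)) ∧
    μ = μ' := by
  have part1 : ∀ φ : Formula Φ (Fin n) Θ,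
      μ (brack M φ) = sSup {r : ℝ≥0∞ | ∃ θ : Θ, r = (θ : ℝ≥0∞) ∧
        Formula.bel i θ φ ∈ di M i ω} ∧
      μ (brack M φ) = μ' (brack M φ) := by
    intro φ
    have e1 := brack_val hdense hμ h φ
    have e2 := brack_val hdense hμ' h' φ
    exact ⟨e1, e1.trans e2.symm⟩
  refine ⟨part1, ?_⟩
  haveI := hμ
  refine ext_of_generate_finite (generatePiSystem (GenB M)) ?_
    (isPiSystem_generatePiSystem _) ?_ ?_
  · rw [generateFrom_generatePiSystem_eq]
    exact mspace_eq M
  · intro s hs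
    obtain ⟨ψ, hψ⟩ := good_of_mem_piSystem M hs
    rw [mu_eq_of_inter_SatQ hdense hμ h hψ, mu_eq_of_inter_SatQ hdense hμ' h' hψ,
      (part1 ψ).2]
  · simp [measure_univ]
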